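/- arXiv:2208.06037 — 2 statements merged into one kernel-verified Lean document; each statement's English description precedes it below -/
import Mathlib

section
/- Let ε > 0. Let X be a real random variable on a probability space with E[X] = 0, and let K > 0 be such that exp(|X|/K) is integrable and E[exp(|X|/K) − 1 − |X|/K] ≤ ε. Then for every real h with |h|·K ≤ 1, E[exp(hX)] ≤ 1 + ε h² K², and hence E[exp(hX)] ≤ exp(ε h² K²). -/
open MeasureTheory ProbabilityTheory

lemma psiA (t : ℝ) : Real.exp t - 1 - t ≤ Real.exp |t| - 1 - |t| := by
  rcases abs_cases t with ⟨h1, h2⟩ | ⟨h1, h2⟩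
  · rw [h1]
  · rw [h1]
    have hs : Real.sinh t < t := by
      exact Real.sinh_lt_self_iff.2 h2
    rw [Real.sinh_eq] at hs
    nlinarith

lemma psiB (c : ℝ) (hc0 : 0 ≤ c) (hc1 : c ≤ 1) (u : ℝ) (hu : 0 ≤ u) :
    Real.exp (c * u) - 1 - c * u ≤ c ^ 2 * (Real.exp u - 1 - u) := by
  set g : ℝ → ℝ := fun v => c ^ 2 * (Real.exp v - 1 - v) - (Real.exp (c * v) - 1 - c * v) with hg
  set g' : ℝ → ℝ := fun v => c ^ 2 * (Real.exp v - 1) - c * (Real.exp (c * v) - 1) with hg'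
  set g'' : ℝ → ℝ := fun v => c ^ 2 * Real.exp v - c ^ 2 * Real.exp (c * v) with hg''
  have hce : ∀ v : ℝ, HasDerivAt (fun w => Real.exp (c * w)) (c * Real.exp (c * v)) v := by
    intro v
    have := (Real.hasDerivAt_exp (c * v)).comp v ((hasDerivAt_id v).const_mul c)
    exact this.congr_deriv (by ring)
  have hd1 : ∀ v, HasDerivAt g' (g'' v) v := by
    intro v
    have h1 := ((Real.hasDerivAt_exp v).sub_const 1).const_mul (c ^ 2)
    have h2 := ((hce v).sub_const 1).const_mul c
    have := h1.sub h2
    exact this.congr_deriv (by simp only [g'']; ring)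
  have hd0 : ∀ v, HasDerivAt g (g' v) v := by
    intro v
    have h1 := (((Real.hasDerivAt_exp v).sub_const 1).sub (hasDerivAt_id v)).const_mul (c ^ 2)
    have h2 := ((hce v).sub_const 1).sub ((hasDerivAt_id v).const_mul c)
    have := h1.sub h2
    exact this.congr_deriv (by simp only [g']; ring)
  have hg'nonneg : ∀ v ∈ Set.Ici (0:ℝ), 0 ≤ g' v := by
    intro v hv
    have hmono : MonotoneOn g' (Set.Ici 0) := by
      apply monotoneOn_of_deriv_nonneg (convex_Ici 0)
      · exact fun x _ => (hd1 x).continuousAt.continuousWithinAt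
      · exact fun x _ => (hd1 x).differentiableAt.differentiableWithinAt
      · intro x hx
        rw [(hd1 x).deriv]
        have hx0 : (0:ℝ) ≤ x := le_of_lt (by simpa using hx)
        have : c * x ≤ x := by nlinarith
        have := Real.exp_le_exp.2 this
        simp only [hg'']
        nlinarith [Real.exp_pos x, sq_nonneg c]
    have h0 : g' 0 = 0 := by simp [hg']
    have := hmono (Set.self_mem_Ici) hv (by simpa using hv)
    simpa [h0] using this
  have hmono : MonotoneOn g (Set.Ici 0) := by
    apply monotoneOn_of_deriv_nonneg (convex_Ici 0)
    · exact fun x _ => (hd0 x).continuousAt.continuousWithinAt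
    · exact fun x _ => (hd0 x).differentiableAt.differentiableWithinAt
    · intro x hx
      rw [(hd0 x).deriv]
      exact hg'nonneg x (le_of_lt (by simpa using hx))
  have h0 : g 0 = 0 := by simp [hg]
  have := hmono Set.self_mem_Ici (by exact hu) hu
  rw [h0] at this
  simp only [hg] at this
  linarith

/-- Theorem 1.ε: if `E X = 0` and `K > 0` satisfies `E[exp(|X|/K) − 1 − |X|/K] ≤ ε`
(so `K` is admissible for the generalized Orlicz norm `‖X‖_{ψ₁₁;ε}`), then for every
real `h` with `|h| K ≤ 1`, `E[exp(hX)] ≤ 1 + ε h² K² ≤ exp(ε h² K²)`. -/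
theorem mgf_le_of_psi11_eps_norm_le {Ω : Type*} [MeasureSpace Ω]
    [IsProbabilityMeasure (ℙ : Measure Ω)] (X : Ω → ℝ)
    (ε : ℝ) (hε : 0 < ε)
    (hXint : Integrable X) (hmean : ∫ ω, X ω = 0)
    (K : ℝ) (hK : 0 < K)
    (hint : Integrable (fun ω => Real.exp (|X ω| / K)))
    (horlicz : ∫ ω, (Real.exp (|X ω| / K) - 1 - |X ω| / K) ≤ ε)
    (h : ℝ) (hh : |h| * K ≤ 1) :
    (∫ ω, Real.exp (h * X ω)) ≤ 1 + ε * h ^ 2 * K ^ 2 ∧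
      (∫ ω, Real.exp (h * X ω)) ≤ Real.exp (ε * h ^ 2 * K ^ 2) := by
  set c : ℝ := |h| * K with hc
  have hc0 : 0 ≤ c := mul_nonneg (abs_nonneg h) hK.le
  have hc2 : c ^ 2 = h ^ 2 * K ^ 2 := by rw [hc]; rw [mul_pow, sq_abs]
  -- pointwise bound
  have hpt : ∀ ω, Real.exp (h * X ω) ≤
      1 + h * X ω + c ^ 2 * (Real.exp (|X ω| / K) - 1 - |X ω| / K) := by
    intro ω
    set u : ℝ := |X ω| / K with hu
    have hu0 : 0 ≤ u := div_nonneg (abs_nonneg _) hK.le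
    have habs : |h * X ω| = c * u := by
      rw [abs_mul, hc, hu]; field_simp
    have hA := psiA (h * X ω)
    rw [habs] at hA
    have hB := psiB c hc0 hh u hu0
    linarith
  -- integrability
  have hgint : Integrable (fun ω => Real.exp (|X ω| / K) - 1 - |X ω| / K) :=
    (hint.sub (integrable_const 1)).sub (hXint.abs.div_const K)
  have hRHSint : Integrable (fun ω =>
      1 + h * X ω + c ^ 2 * (Real.exp (|X ω| / K) - 1 - |X ω| / K)) :=
    ((integrable_const 1).add (hXint.const_mul h)).add (hgint.const_mul (c ^ 2))
  have hLHSmeas : AEStronglyMeasurable (fun ω => Real.exp (h * X ω)) ℙ :=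
    (Real.continuous_exp.comp_aestronglyMeasurable (hXint.aestronglyMeasurable.const_mul h))
  have hLHSint : Integrable (fun ω => Real.exp (h * X ω)) := by
    apply hint.mono' hLHSmeas
    filter_upwards with ω
    rw [Real.norm_eq_abs, Real.abs_exp]
    apply Real.exp_le_exp.2
    have h1 : h * X ω ≤ |h| * |X ω| := (le_abs_self _).trans (abs_mul h (X ω)).le
    have hinv : |h| ≤ 1 / K := (le_div_iff₀ hK).mpr hh
    have h2 : |h| * |X ω| ≤ |X ω| / K := by
      calc |h| * |X ω| ≤ (1 / K) * |X ω| := mul_le_mul_of_nonneg_right hinv (abs_nonneg _)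
        _ = |X ω| / K := by ring
    linarith
  have hint1 : (∫ ω, Real.exp (h * X ω)) ≤
      ∫ ω, (1 + h * X ω + c ^ 2 * (Real.exp (|X ω| / K) - 1 - |X ω| / K)) :=
    integral_mono hLHSint hRHSint hpt
  have hcalc : (∫ ω, (1 + h * X ω + c ^ 2 * (Real.exp (|X ω| / K) - 1 - |X ω| / K) : ℝ))
      = 1 + c ^ 2 * ∫ ω, (Real.exp (|X ω| / K) - 1 - |X ω| / K) := by
    rw [integral_add (show Integrable (fun ω => 1 + h * X ω) ℙ from (integrable_const 1).add (hXint.const_mul h)) (hgint.const_mul (c ^ 2)),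
      integral_add (integrable_const 1) (hXint.const_mul h),
      MeasureTheory.integral_const_mul, MeasureTheory.integral_const_mul, hmean, integral_const]
    simp
  have key : (∫ ω, Real.exp (h * X ω)) ≤ 1 + ε * h ^ 2 * K ^ 2 := by
    rw [hcalc, hc2] at hint1
    have : c ^ 2 * ∫ ω, (Real.exp (|X ω| / K) - 1 - |X ω| / K) ≤ c ^ 2 * ε :=
      mul_le_mul_of_nonneg_left horlicz (sq_nonneg c)
    rw [hc2] at this
    have he : ε * h ^ 2 * K ^ 2 = h ^ 2 * K ^ 2 * ε := by ring
    linarith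
  refine ⟨key, key.trans ?_⟩
  have : 0 ≤ ε * h ^ 2 * K ^ 2 := by positivity
  linarith [Real.add_one_le_exp (ε * h ^ 2 * K ^ 2)]
end

section
/- Let ε > 0 and let X₁, …, Xₙ be independent real random variables on a probability space with E[Xᵢ] = 0 for each i, and let K₁, …, Kₙ > 0 be such that for each i, exp(|Xᵢ|/Kᵢ) is integrable and E[exp(|Xᵢ|/Kᵢ) − 1 − |Xᵢ|/Kᵢ] ≤ ε. Set Sₙ = X₁ + ⋯ + Xₙ, B² = ε·(K₁² + ⋯ + Kₙ²), and M = max(K₁, …, Kₙ). Then for every real x with 0 ≤ x ≤ 2B²/M, P(Sₙ ≥ x) ≤ exp(−x²/(4B²)), and for every real x with x ≥ 2B²/M, P(Sₙ ≥ x) ≤ exp(−(x/M − B²/M²)). -/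
open MeasureTheory ProbabilityTheory Finset

lemma exp_le_one_add_add (y : ℝ) :
    Real.exp y ≤ 1 + y + (Real.exp |y| - 1 - |y|) := by
  rcases le_or_gt 0 y with h | h
  · rw [abs_of_nonneg h]; ring_nf; exact le_rfl
  · rw [abs_of_neg h]
    have hs : Real.sinh y < y := by
      have := Real.self_lt_sinh_iff.mpr (neg_pos.mpr h)
      rw [Real.sinh_neg] at this; linarith
    rw [Real.sinh_eq] at hs
    linarith

lemma psi_tsum (b : ℝ) :
    Real.exp b - 1 - b = ∑' n : ℕ, b ^ (n + 2) / (Nat.factorial (n + 2) : ℝ) := by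
  have hs := Real.summable_pow_div_factorial b
  have hexp : Real.exp b = ∑' n : ℕ, b ^ n / (Nat.factorial n : ℝ) := by
    rw [Real.exp_eq_exp_ℝ, NormedSpace.exp_eq_tsum_div]
  have h1 : ∑' n : ℕ, b ^ n / (Nat.factorial n : ℝ)
      = b ^ 0 / (Nat.factorial 0 : ℝ) + ∑' n : ℕ, b ^ (n + 1) / (Nat.factorial (n + 1) : ℝ) :=
    Summable.tsum_eq_zero_add hs
  have hs2 : Summable (fun n : ℕ => b ^ (n + 1) / (Nat.factorial (n + 1) : ℝ)) :=
    (summable_nat_add_iff 1).mpr hs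
  have h2 : ∑' n : ℕ, b ^ (n + 1) / (Nat.factorial (n + 1) : ℝ)
      = b ^ 1 / (Nat.factorial 1 : ℝ) + ∑' n : ℕ, b ^ (n + 2) / (Nat.factorial (n + 2) : ℝ) :=
    Summable.tsum_eq_zero_add hs2
  simp only [pow_zero, Nat.factorial_zero, pow_one, Nat.factorial_one, Nat.cast_one] at h1 h2
  rw [hexp, h1, h2]; ring

lemma psi_mul_le {u a : ℝ} (hu0 : 0 ≤ u) (hu1 : u ≤ 1) (ha : 0 ≤ a) :
    Real.exp (u * a) - 1 - u * a ≤ u ^ 2 * (Real.exp a - 1 - a) := by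
  rw [psi_tsum, psi_tsum, ← tsum_mul_left]
  refine Summable.tsum_le_tsum (fun n => ?_) ((summable_nat_add_iff 2).mpr
    (Real.summable_pow_div_factorial (u * a)))
    (((summable_nat_add_iff 2).mpr (Real.summable_pow_div_factorial a)).mul_left _)
  rw [mul_pow, mul_div_assoc]
  have h1 : u ^ (n + 2) ≤ u ^ 2 := pow_le_pow_of_le_one hu0 hu1 (by omega)
  have h2 : 0 ≤ a ^ (n + 2) / (Nat.factorial (n + 2) : ℝ) := by positivity
  exact mul_le_mul_of_nonneg_right h1 h2

lemma iIndepFun_congr_ae {Ω : Type*} [MeasurableSpace Ω] {μ : Measure Ω}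
    {ι : Type*} {X Y : ι → Ω → ℝ}
    (h : iIndepFun X μ) (hXY : ∀ i, X i =ᵐ[μ] Y i) :
    iIndepFun Y μ := by
  rw [iIndepFun_iff_measure_inter_preimage_eq_mul] at h ⊢
  intro S sets hsets
  have hpre : ∀ i, Y i ⁻¹' sets i =ᵐ[μ] X i ⁻¹' sets i := by
    intro i
    filter_upwards [hXY i] with ω hω
    change (Y i ω ∈ sets i) = (X i ω ∈ sets i)
    rw [hω]
  have h2 : (⋂ i ∈ S, Y i ⁻¹' sets i) =ᵐ[μ] (⋂ i ∈ S, X i ⁻¹' sets i) := by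
    rw [Filter.eventuallyEq_set]
    have := (ae_ball_iff S.countable_toSet).mpr (fun i (_ : i ∈ (S : Set ι)) => hXY i)
    filter_upwards [this] with ω hω
    simp only [Set.mem_iInter, Set.mem_preimage]
    constructor
    · intro hmem i hi; rw [hω i hi]; exact hmem i hi
    · intro hmem i hi; rw [← hω i hi]; exact hmem i hi
  rw [measure_congr h2, h S hsets]
  exact Finset.prod_congr rfl fun i _ => (measure_congr (hpre i)).symm

lemma mgf_le_aux {Ω : Type*} [MeasureSpace Ω] [IsProbabilityMeasure (ℙ : Measure Ω)]
    {ε : ℝ} (hε : 0 < ε) {X : Ω → ℝ} {K t : ℝ}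
    (hXint : Integrable X) (hmean : ∫ ω, X ω = 0) (hK : 0 < K)
    (hint : Integrable (fun ω => Real.exp (|X ω| / K)))
    (horlicz : ∫ ω, (Real.exp (|X ω| / K) - 1 - |X ω| / K) ≤ ε)
    (ht : 0 ≤ t) (htK : t * K ≤ 1) :
    mgf X ℙ t ≤ Real.exp (t ^ 2 * K ^ 2 * ε) := by
  have hptwise : ∀ ω, Real.exp (t * X ω)
      ≤ 1 + t * X ω + t ^ 2 * K ^ 2 * (Real.exp (|X ω| / K) - 1 - |X ω| / K) := by
    intro ω
    have h1 := exp_le_one_add_add (t * X ω)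
    have habs : |t * X ω| = (t * K) * (|X ω| / K) := by
      rw [abs_mul, abs_of_nonneg ht]; field_simp
    have h2 : Real.exp |t * X ω| - 1 - |t * X ω|
        ≤ (t * K) ^ 2 * (Real.exp (|X ω| / K) - 1 - |X ω| / K) := by
      rw [habs]
      exact psi_mul_le (mul_nonneg ht hK.le) htK (by positivity)
    calc Real.exp (t * X ω) ≤ 1 + t * X ω + (Real.exp |t * X ω| - 1 - |t * X ω|) := h1
      _ ≤ 1 + t * X ω + (t * K) ^ 2 * (Real.exp (|X ω| / K) - 1 - |X ω| / K) := by linarith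
      _ = 1 + t * X ω + t ^ 2 * K ^ 2 * (Real.exp (|X ω| / K) - 1 - |X ω| / K) := by ring
  have hintL : Integrable (fun ω => Real.exp (t * X ω)) := by
    refine hint.mono ?_ (Filter.Eventually.of_forall fun ω => ?_)
    · exact (Real.continuous_exp.comp_aestronglyMeasurable
        (hXint.aestronglyMeasurable.const_smul t))
    · rw [Real.norm_eq_abs, Real.norm_eq_abs, abs_of_nonneg (Real.exp_pos _).le,
        abs_of_nonneg (Real.exp_pos _).le]
      apply Real.exp_le_exp.mpr
      calc t * X ω ≤ |t * X ω| := le_abs_self _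
        _ = (t * K) * (|X ω| / K) := by rw [abs_mul, abs_of_nonneg ht]; field_simp
        _ ≤ 1 * (|X ω| / K) := by
            apply mul_le_mul_of_nonneg_right htK (by positivity)
        _ = |X ω| / K := one_mul _
  have hintPsi : Integrable (fun ω => Real.exp (|X ω| / K) - 1 - |X ω| / K) :=
    (hint.sub (integrable_const 1)).sub (hXint.abs.div_const K)
  have hintR : Integrable (fun ω =>
      1 + t * X ω + t ^ 2 * K ^ 2 * (Real.exp (|X ω| / K) - 1 - |X ω| / K)) :=
    ((integrable_const 1).add (hXint.const_mul t)).add (hintPsi.const_mul _)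
  have hle : mgf X ℙ t ≤ ∫ ω, (1 + t * X ω
      + t ^ 2 * K ^ 2 * (Real.exp (|X ω| / K) - 1 - |X ω| / K)) := by
    exact integral_mono hintL hintR hptwise
  have heval : ∫ ω, (1 + t * X ω
      + t ^ 2 * K ^ 2 * (Real.exp (|X ω| / K) - 1 - |X ω| / K))
      = 1 + t ^ 2 * K ^ 2 * ∫ ω, (Real.exp (|X ω| / K) - 1 - |X ω| / K) := by
    have hC : Integrable (fun ω => t * X ω) := by exact hXint.const_mul t
    have hA : Integrable (fun ω => 1 + t * X ω) := by exact (integrable_const 1).add hC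
    have hB : Integrable (fun ω =>
        t ^ 2 * K ^ 2 * (Real.exp (|X ω| / K) - 1 - |X ω| / K)) := by
      exact hintPsi.const_mul _
    rw [integral_add hA hB, integral_add (integrable_const 1) hC,
      integral_const_mul, integral_const_mul, hmean]
    simp
  refine hle.trans ?_
  rw [heval]
  calc 1 + t ^ 2 * K ^ 2 * ∫ ω, (Real.exp (|X ω| / K) - 1 - |X ω| / K)
      ≤ 1 + t ^ 2 * K ^ 2 * ε := by
        have := mul_le_mul_of_nonneg_left horlicz (by positivity : (0:ℝ) ≤ t ^ 2 * K ^ 2)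
        linarith
    _ ≤ Real.exp (t ^ 2 * K ^ 2 * ε) := by
        have := Real.add_one_le_exp (t ^ 2 * K ^ 2 * ε); linarith
lemma main_meas {Ω : Type*} [MeasureSpace Ω]
    [IsProbabilityMeasure (ℙ : Measure Ω)]
    {ι : Type*} [Fintype ι] [Nonempty ι]
    (ε : ℝ) (hε : 0 < ε)
    (X : ι → Ω → ℝ) (K : ι → ℝ)
    (hmeas : ∀ i, Measurable (X i))
    (hindep : iIndepFun X ℙ)
    (hXint : ∀ i, Integrable (X i)) (hmean : ∀ i, ∫ ω, X i ω = 0)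
    (hK : ∀ i, 0 < K i)
    (hint : ∀ i, Integrable (fun ω => Real.exp (|X i ω| / K i)))
    (horlicz : ∀ i, ∫ ω, (Real.exp (|X i ω| / K i) - 1 - |X i ω| / K i) ≤ ε)
    (B M : ℝ) (hB : B ^ 2 = ε * ∑ i, K i ^ 2)
    (hM : M = Finset.univ.sup' Finset.univ_nonempty K) :
    (∀ x : ℝ, 0 ≤ x → x ≤ 2 * B ^ 2 / M →
      (ℙ {ω | x ≤ ∑ i, X i ω}).toReal ≤ Real.exp (-(x ^ 2 / (4 * B ^ 2)))) ∧
    (∀ x : ℝ, 2 * B ^ 2 / M ≤ x →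
      (ℙ {ω | x ≤ ∑ i, X i ω}).toReal ≤ Real.exp (-(x / M - B ^ 2 / M ^ 2))) := by
  have hKM : ∀ i, K i ≤ M := fun i => hM ▸ Finset.le_sup' K (Finset.mem_univ i)
  have hMpos : 0 < M := lt_of_lt_of_le (hK (Classical.arbitrary ι)) (hKM _)
  have hB2pos : 0 < B ^ 2 := by
    rw [hB]
    exact mul_pos hε (Finset.sum_pos (fun i _ => pow_pos (hK i) 2) Finset.univ_nonempty)
  have key : ∀ x t : ℝ, 0 ≤ t → t * M ≤ 1 →
      (ℙ {ω | x ≤ ∑ i, X i ω}).toReal ≤ Real.exp (-t * x + t ^ 2 * B ^ 2) := by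
    intro x t ht htM
    have htK : ∀ i, t * K i ≤ 1 := fun i =>
      le_trans (mul_le_mul_of_nonneg_left (hKM i) ht) htM
    have hintt : ∀ i, Integrable (fun ω => Real.exp (t * X i ω)) := by
      intro i
      refine (hint i).mono ?_ (Filter.Eventually.of_forall fun ω => ?_)
      · exact Real.continuous_exp.comp_aestronglyMeasurable
          ((hXint i).aestronglyMeasurable.const_smul t)
      · rw [Real.norm_eq_abs, Real.norm_eq_abs, abs_of_nonneg (Real.exp_pos _).le,
          abs_of_nonneg (Real.exp_pos _).le]
        apply Real.exp_le_exp.mpr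
        calc t * X i ω ≤ |t * X i ω| := le_abs_self _
          _ = (t * K i) * (|X i ω| / K i) := by
              rw [abs_mul, abs_of_nonneg ht]; field_simp [(hK i).ne']
          _ ≤ 1 * (|X i ω| / K i) :=
              mul_le_mul_of_nonneg_right (htK i) (div_nonneg (abs_nonneg _) (hK i).le)
          _ = |X i ω| / K i := one_mul _
    have hsint : Integrable (fun ω => Real.exp (t * (∑ i, X i) ω)) :=
      hindep.integrable_exp_mul_sum hmeas (fun i _ => hintt i)
    have hch := measure_ge_le_exp_mul_mgf (X := ∑ i, X i) (μ := ℙ) x ht hsint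
    have hset : {ω | x ≤ (∑ i, X i) ω} = {ω | x ≤ ∑ i, X i ω} := by
      ext ω; simp [Finset.sum_apply]
    rw [hset, hindep.mgf_sum hmeas] at hch
    refine hch.trans ?_
    have hprod : ∏ i, mgf (X i) ℙ t ≤ ∏ i : ι, Real.exp (t ^ 2 * K i ^ 2 * ε) := by
      refine Finset.prod_le_prod (fun i _ => mgf_nonneg) (fun i _ => ?_)
      exact mgf_le_aux hε (hXint i) (hmean i) (hK i) (hint i) (horlicz i) ht (htK i)
    calc Real.exp (-t * x) * ∏ i, mgf (X i) ℙ t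
        ≤ Real.exp (-t * x) * ∏ i : ι, Real.exp (t ^ 2 * K i ^ 2 * ε) := by
          exact mul_le_mul_of_nonneg_left hprod (Real.exp_pos _).le
      _ = Real.exp (-t * x + t ^ 2 * B ^ 2) := by
          have hsum : ∑ i : ι, t ^ 2 * K i ^ 2 * ε = t ^ 2 * B ^ 2 := by
            rw [hB]
            simp [Finset.mul_sum, mul_comm, mul_left_comm, mul_assoc]
          rw [← Real.exp_sum, hsum, ← Real.exp_add]
  constructor
  · intro x hx0 hx
    have ht : (0:ℝ) ≤ x / (2 * B ^ 2) := by positivity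
    have htM : (x / (2 * B ^ 2)) * M ≤ 1 := by
      rw [div_mul_eq_mul_div, div_le_one (by positivity)]
      calc x * M ≤ (2 * B ^ 2 / M) * M := by
            exact mul_le_mul_of_nonneg_right hx hMpos.le
        _ = 2 * B ^ 2 := by field_simp
    have h := key x _ ht htM
    refine h.trans (le_of_eq ?_)
    congr 1
    field_simp
    ring
  · intro x hx
    have hx0 : 0 ≤ x := le_trans (by positivity) hx
    have htM : (1 / M) * M ≤ 1 := by rw [one_div, inv_mul_cancel₀ hMpos.ne']
    have h := key x _ (by positivity : (0:ℝ) ≤ 1 / M) htM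
    refine h.trans (le_of_eq ?_)
    congr 1
    field_simp
    ring

/-- Theorem 2.ε, two-case form: for independent mean-zero `Xᵢ` with
`E[exp(|Xᵢ|/Kᵢ) − 1 − |Xᵢ|/Kᵢ] ≤ ε`, with `B² = ε ∑ Kᵢ²` and `M = max Kᵢ`:
`P(Sₙ ≥ x) ≤ exp(−x²/(4B²))` for `0 ≤ x ≤ 2B²/M`, and
`P(Sₙ ≥ x) ≤ exp(−(x/M − B²/M²))` for `x ≥ 2B²/M`. -/
theorem tail_le_two_cases_eps {Ω : Type*} [MeasureSpace Ω]
    [IsProbabilityMeasure (ℙ : Measure Ω)]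
    {ι : Type*} [Fintype ι] [Nonempty ι]
    (ε : ℝ) (hε : 0 < ε)
    (X : ι → Ω → ℝ) (K : ι → ℝ)
    (hindep : iIndepFun X ℙ)
    (hXint : ∀ i, Integrable (X i)) (hmean : ∀ i, ∫ ω, X i ω = 0)
    (hK : ∀ i, 0 < K i)
    (hint : ∀ i, Integrable (fun ω => Real.exp (|X i ω| / K i)))
    (horlicz : ∀ i, ∫ ω, (Real.exp (|X i ω| / K i) - 1 - |X i ω| / K i) ≤ ε)
    (B M : ℝ) (hB : B ^ 2 = ε * ∑ i, K i ^ 2)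
    (hM : M = Finset.univ.sup' Finset.univ_nonempty K) :
    (∀ x : ℝ, 0 ≤ x → x ≤ 2 * B ^ 2 / M →
      (ℙ {ω | x ≤ ∑ i, X i ω}).toReal ≤ Real.exp (-(x ^ 2 / (4 * B ^ 2)))) ∧
    (∀ x : ℝ, 2 * B ^ 2 / M ≤ x →
      (ℙ {ω | x ≤ ∑ i, X i ω}).toReal ≤ Real.exp (-(x / M - B ^ 2 / M ^ 2))) := by
  classical
  set Y : ι → Ω → ℝ := fun i => ((hXint i).aemeasurable.mk (X i)) with hY
  have hmeasY : ∀ i, Measurable (Y i) := fun i => (hXint i).aemeasurable.measurable_mk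
  have hae : ∀ i, X i =ᵐ[ℙ] Y i := fun i => (hXint i).aemeasurable.ae_eq_mk
  have hindepY : iIndepFun Y ℙ := iIndepFun_congr_ae hindep hae
  have hYint : ∀ i, Integrable (Y i) := fun i => (hXint i).congr (hae i)
  have hmeanY : ∀ i, ∫ ω, Y i ω = 0 := fun i => by
    rw [← integral_congr_ae (hae i)]; exact hmean i
  have hintY : ∀ i, Integrable (fun ω => Real.exp (|Y i ω| / K i)) := fun i =>
    (hint i).congr (by filter_upwards [hae i] with ω h; rw [h])
  have horliczY : ∀ i, ∫ ω, (Real.exp (|Y i ω| / K i) - 1 - |Y i ω| / K i) ≤ ε := fun i => by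
    have heq := integral_congr_ae (μ := ℙ)
      (f := fun ω => Real.exp (|X i ω| / K i) - 1 - |X i ω| / K i)
      (g := fun ω => Real.exp (|Y i ω| / K i) - 1 - |Y i ω| / K i)
      (by filter_upwards [hae i] with ω h; rw [h])
    rw [← heq]
    exact horlicz i
  have hsetcongr : ∀ x : ℝ,
      ℙ {ω | x ≤ ∑ i, X i ω} = ℙ {ω | x ≤ ∑ i, Y i ω} := by
    intro x
    apply measure_congr
    rw [Filter.eventuallyEq_set]
    have hall := (ae_ball_iff (Set.countable_univ (α := ι))).mpr
      (fun i (_ : i ∈ (Set.univ : Set ι)) => hae i)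
    filter_upwards [hall] with ω hω
    have hsum : ∑ i, X i ω = ∑ i, Y i ω :=
      Finset.sum_congr rfl fun i _ => hω i (Set.mem_univ i)
    simp only [Set.mem_setOf_eq, hsum]
  obtain ⟨h1, h2⟩ := main_meas ε hε Y K hmeasY hindepY hYint hmeanY hK hintY horliczY B M hB hM
  constructor
  · intro x hx0 hx
    rw [hsetcongr x]; exact h1 x hx0 hx
  · intro x hx
    rw [hsetcongr x]; exact h2 x hx
end
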